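/- Let ρ^{OQ} be a pure state on the tensor product of finite-dimensional Hilbert spaces H_O ⊗ H_Q, with reduced state ρ^O = tr_Q(ρ^{OQ}). A finite family {σ_a} of positive semidefinite operators on H_O can be remotely prepared from ρ^{OQ} (i.e., there exists a POVM {P_a} on H_Q with tr_Q((1⊗P_a) ρ^{OQ}) = σ_a for all a) if and only if Σ_a σ_a = ρ^O. -/

import Mathlib

open Matrix Kronecker BigOperators
open scoped ComplexOrder

section RSPaux
variable {n : Type*} [Fintype n] [DecidableEq n]

private lemma aux_psd_smul {M : Matrix n n ℂ} (hM : M.PosSemidef) {r : ℝ} (hr : 0 ≤ r) :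
    ((r : ℂ) • M).PosSemidef := by
  constructor
  · rw [Matrix.IsHermitian, conjTranspose_smul, hM.1.eq, Complex.star_def, Complex.conj_ofReal]
  · intro x
    exact (hM.smul (show (0:ℂ) ≤ (r:ℂ) by exact_mod_cast hr)).2 x

open scoped MatrixOrder in
private lemma aux_psd_neg {A : Matrix n n ℂ} (hA : A.PosSemidef) (hA' : (-A).PosSemidef) :
    A = 0 := by
  have hz : ∀ x : n → ℂ, (CFC.sqrt A) *ᵥ x = 0 := by
    intro x
    have h1 : star x ⬝ᵥ A *ᵥ x = 0 := by
      refine le_antisymm ?_ (hA.dotProduct_mulVec_nonneg x)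
      have := hA'.dotProduct_mulVec_nonneg x
      rw [neg_mulVec, dotProduct_neg] at this
      exact neg_nonneg.mp this
    have h2 : star ((CFC.sqrt A) *ᵥ x) ⬝ᵥ ((CFC.sqrt A) *ᵥ x) = 0 := by
      have hS : (CFC.sqrt A)ᴴ = (CFC.sqrt A) := (CFC.sqrt_nonneg A).posSemidef.1
      calc star ((CFC.sqrt A) *ᵥ x) ⬝ᵥ ((CFC.sqrt A) *ᵥ x)
          = star x ⬝ᵥ ((CFC.sqrt A)ᴴ * (CFC.sqrt A)) *ᵥ x := by
            rw [star_mulVec, ← dotProduct_mulVec, mulVec_mulVec]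
        _ = star x ⬝ᵥ A *ᵥ x := by rw [hS, CFC.sqrt_mul_sqrt_self A hA.nonneg]
        _ = 0 := h1
    exact dotProduct_star_self_eq_zero.mp h2
  have hS0 : (CFC.sqrt A) = 0 := by
    ext i j
    simpa [Matrix.mulVec_single] using congrFun (hz (Pi.single j 1)) i
  rw [← CFC.sqrt_mul_sqrt_self A hA.nonneg, hS0, mul_zero]

open scoped MatrixOrder in
private lemma aux_sandwich {A E : Matrix n n ℂ} (hA : A.PosSemidef) (hE : E.IsHermitian)
    (h : E * A * E = 0) : A * E = 0 := by
  have key : ((CFC.sqrt A) * E)ᴴ * ((CFC.sqrt A) * E) = 0 := by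
    calc ((CFC.sqrt A) * E)ᴴ * ((CFC.sqrt A) * E)
        = Eᴴ * (CFC.sqrt A)ᴴ * ((CFC.sqrt A) * E) := by rw [conjTranspose_mul]
      _ = E * ((CFC.sqrt A) * (CFC.sqrt A)) * E := by
          rw [hE.eq, (CFC.sqrt_nonneg A).posSemidef.1.eq]; noncomm_ring
      _ = 0 := by rw [CFC.sqrt_mul_sqrt_self A hA.nonneg, h]
  have h0 : (CFC.sqrt A) * E = 0 := Matrix.conjTranspose_mul_self_eq_zero.mp key
  calc A * E = (CFC.sqrt A) * ((CFC.sqrt A) * E) := by rw [← mul_assoc, CFC.sqrt_mul_sqrt_self A hA.nonneg]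
    _ = 0 := by rw [h0, mul_zero]

private lemma aux_psd_sum {ι : Type*} (s : Finset ι) (f : ι → Matrix n n ℂ)
    (h : ∀ a ∈ s, (f a).PosSemidef) : (∑ a ∈ s, f a).PosSemidef :=
  Finset.sum_induction f _ (fun _ _ ha hb => ha.add hb) .zero h

private lemma aux_pinv {R : Matrix n n ℂ} (hR : R.PosSemidef) :
    ∃ Rp : Matrix n n ℂ, Rp.IsHermitian ∧ R * Rp = Rp * R ∧ R * Rp * R = R ∧ Rp * R * Rp = Rp := by
  set U : Matrix n n ℂ := (hR.1.eigenvectorUnitary : Matrix n n ℂ) with hUdef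
  have hUU : Uᴴ * U = 1 := by
    simpa [Matrix.star_eq_conjTranspose] using Unitary.coe_star_mul_self hR.1.eigenvectorUnitary
  set d : n → ℝ := hR.1.eigenvalues with hd
  have hspec : R = U * diagonal (fun i => (d i : ℂ)) * Uᴴ := by
    have := hR.1.spectral_theorem
    rw [hUdef, hd]
    simpa [Function.comp_def, Matrix.star_eq_conjTranspose] using this
  set g : n → ℂ := fun i => if d i = 0 then 0 else ((d i)⁻¹ : ℝ) with hg
  have key : ∀ f f' : n → ℂ,
      (U * diagonal f * Uᴴ) * (U * diagonal f' * Uᴴ)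
        = U * diagonal (fun i => f i * f' i) * Uᴴ := by
    intro f f'
    calc (U * diagonal f * Uᴴ) * (U * diagonal f' * Uᴴ)
        = U * (diagonal f * ((Uᴴ * U) * (diagonal f' * Uᴴ))) := by noncomm_ring
      _ = U * (diagonal f * diagonal f') * Uᴴ := by rw [hUU, one_mul]; noncomm_ring
      _ = U * diagonal (fun i => f i * f' i) * Uᴴ := by rw [diagonal_mul_diagonal]
  have hherm : ∀ f : n → ℂ, (∀ i, star (f i) = f i) → (U * diagonal f * Uᴴ).IsHermitian := by
    intro f hf
    rw [Matrix.IsHermitian]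
    calc (U * diagonal f * Uᴴ)ᴴ = Uᴴᴴ * (diagonal f)ᴴ * Uᴴ := by
          rw [conjTranspose_mul, conjTranspose_mul]; noncomm_ring
      _ = U * diagonal f * Uᴴ := by
          rw [conjTranspose_conjTranspose, diagonal_conjTranspose]
          have : star f = f := funext hf
          rw [this]
  refine ⟨U * diagonal g * Uᴴ, hherm g ?_, ?_, ?_, ?_⟩
  · intro i
    by_cases h : d i = 0 <;> simp [hg, h, Complex.star_def, Complex.conj_ofReal]
  · have hfe : (fun i => (d i : ℂ) * g i) = (fun i => g i * (d i : ℂ)) := by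
      funext i; exact mul_comm _ _
    rw [hspec, key, key, hfe]
  · have hfe : (fun i => ((d i : ℂ) * g i) * (d i : ℂ)) = (fun i => (d i : ℂ)) := by
      funext i
      by_cases h : d i = 0
      · rw [hg]; simp [h]
      · rw [hg]; simp only [if_neg h]; push_cast; field_simp
    rw [hspec, key, key, hfe]
  · have hfe : (fun i => (g i * (d i : ℂ)) * g i) = g := by
      funext i
      by_cases h : d i = 0
      · rw [hg]; simp [h]
      · rw [hg]; simp only [if_neg h]; push_cast; field_simp
    rw [hspec, key, key, hfe]

end RSPaux

/-- Partial trace over the second (query) system. -/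
noncomputable def ptraceQ {O Q : Type*} [Fintype Q]
    (M : Matrix (O × Q) (O × Q) ℂ) : Matrix O O ℂ :=
  Matrix.of fun i j => ∑ k : Q, M (i, k) (j, k)

/-- Remote state preparation characterization (pure-state case):
a finite family of PSD operators on `O` can be remotely prepared from a pure
bipartite state `ρ` on `O × Q` iff the family sums to the reduced state of `ρ`. -/
theorem remote_state_preparation
    {O Q ι : Type*} [Fintype O] [Fintype Q] [Fintype ι]
    [DecidableEq O] [DecidableEq Q]
    (v : O × Q → ℂ) (hv : ∑ i, ‖v i‖ ^ 2 = 1)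
    (ρ : Matrix (O × Q) (O × Q) ℂ)
    (hρ : ρ = Matrix.of fun i j => v i * (starRingEnd ℂ) (v j))
    (σ : ι → Matrix O O ℂ) (hσ : ∀ a, (σ a).PosSemidef) :
    (∃ P : ι → Matrix Q Q ℂ,
        (∀ a, (P a).PosSemidef) ∧ (∑ a, P a = 1) ∧
        ∀ a, ptraceQ (((1 : Matrix O O ℂ) ⊗ₖ P a) * ρ) = σ a) ↔
      ∑ a, σ a = ptraceQ ρ := by
  classical
  set V : Matrix O Q ℂ := Matrix.of (fun i k => v (i, k)) with hVdef
  have hbridge : ∀ P : Matrix Q Q ℂ,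
      ptraceQ (((1 : Matrix O O ℂ) ⊗ₖ P) * ρ) = V * Pᵀ * Vᴴ := by
    intro P
    subst hρ
    ext i j
    simp only [ptraceQ, hVdef, Matrix.of_apply, Matrix.mul_apply, Fintype.sum_prod_type,
      kroneckerMap_apply, Matrix.one_apply, conjTranspose_apply, transpose_apply,
      ite_mul, one_mul, zero_mul]
    refine Finset.sum_congr rfl fun k _ => ?_
    rw [Finset.sum_comm]
    simp only [Finset.sum_ite_eq, Finset.mem_univ, if_true]
    rw [Finset.sum_mul]
    exact Finset.sum_congr rfl fun k' _ => by rw [Complex.star_def]; ring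
  have hptr : ptraceQ ρ = V * Vᴴ := by
    subst hρ
    ext i j
    simp [ptraceQ, hVdef, Matrix.mul_apply, conjTranspose_apply]
  constructor
  · rintro ⟨P, _, hP2, hP3⟩
    calc ∑ a, σ a = ∑ a, V * (P a)ᵀ * Vᴴ :=
          Finset.sum_congr rfl fun a _ => by rw [← hP3 a, hbridge]
      _ = V * (∑ a, P a)ᵀ * Vᴴ := by
          simp [Matrix.transpose_sum, Matrix.mul_sum, Matrix.sum_mul]
      _ = ptraceQ ρ := by rw [hP2, transpose_one, Matrix.mul_one, hptr]
  · intro hsum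
    rw [hptr] at hsum
    have hR : (V * Vᴴ).PosSemidef := posSemidef_self_mul_conjTranspose V
    have htrace : (V * Vᴴ).trace = 1 := by
      have h1 : (V * Vᴴ).trace = ∑ p : O × Q, ((‖v p‖ : ℂ)) ^ 2 := by
        rw [Matrix.trace]
        simp [Matrix.diag, hVdef, Matrix.mul_apply, conjTranspose_apply, Fintype.sum_prod_type,
          Complex.mul_conj', Complex.mul_conj]
      rw [h1]
      exact_mod_cast congrArg (Complex.ofReal) hv
    have hι : Nonempty ι := by
      rcases isEmpty_or_nonempty ι with h | h
      · exfalso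
        rw [Finset.univ_eq_empty, Finset.sum_empty] at hsum
        rw [← hsum] at htrace
        simp at htrace
      · exact h
    obtain ⟨Rp, hRpH, hcomm, hRRpR, hRpRRp⟩ := aux_pinv hR
    obtain ⟨E, hEdef⟩ : ∃ E : Matrix O O ℂ, E = 1 - V * Vᴴ * Rp := ⟨_, rfl⟩
    have hE : E.IsHermitian := by
      rw [Matrix.IsHermitian, hEdef, conjTranspose_sub, conjTranspose_one, conjTranspose_mul,
        hRpH.eq, hR.1.eq, ← hcomm]
    have hER : E * (V * Vᴴ) = 0 := by
      rw [hEdef, sub_mul, one_mul, hRRpR, sub_self]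
    have hEzero : ∀ a, σ a * E = 0 ∧ E * σ a = 0 := by
      intro a
      have hrest : (V * Vᴴ - σ a).PosSemidef := by
        have he : V * Vᴴ - σ a = ∑ b ∈ Finset.univ.erase a, σ b := by
          have := Finset.add_sum_erase Finset.univ σ (Finset.mem_univ a)
          rw [hsum] at this
          rw [← this]
          abel
        rw [he]
        exact aux_psd_sum _ _ (fun b _ => hσ b)
      have h1 : (E * σ a * E).PosSemidef := by
        have := (hσ a).conjTranspose_mul_mul_same E
        rwa [hE.eq] at this
      have h2 : (-(E * σ a * E)).PosSemidef := by
        have h3 := hrest.conjTranspose_mul_mul_same E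
        rw [hE.eq] at h3
        have heq : E * (V * Vᴴ - σ a) * E = -(E * σ a * E) := by
          rw [mul_sub, sub_mul, hER, zero_mul, zero_sub]
        rwa [heq] at h3
      have h0 : E * σ a * E = 0 := aux_psd_neg h1 h2
      have hσE : σ a * E = 0 := aux_sandwich (hσ a) hE h0
      refine ⟨hσE, ?_⟩
      have heq : E * σ a = (σ a * E)ᴴ := by
        rw [conjTranspose_mul, hE.eq, (hσ a).1.eq]
      rw [heq, hσE, conjTranspose_zero]
    obtain ⟨K, hKdef⟩ : ∃ K : Matrix Q Q ℂ, K = Vᴴ * Rp * V := ⟨_, rfl⟩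
    have hKherm : K.IsHermitian := by
      rw [Matrix.IsHermitian, hKdef]
      calc (Vᴴ * Rp * V)ᴴ = Vᴴ * (Rpᴴ * Vᴴᴴ) := by
            rw [conjTranspose_mul, conjTranspose_mul]
        _ = Vᴴ * Rp * V := by
            rw [hRpH.eq, conjTranspose_conjTranspose, Matrix.mul_assoc]
    have hKK : K * K = K := by
      rw [hKdef]
      have h5 : (Vᴴ * Rp * V) * (Vᴴ * Rp * V) = Vᴴ * (Rp * (V * Vᴴ) * Rp) * V := by
        simp only [Matrix.mul_assoc]
      rw [h5, hRpRRp]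
    have hKpsd1 : ((1 : Matrix Q Q ℂ) - K).PosSemidef := by
      have hh : ((1 : Matrix Q Q ℂ) - K).IsHermitian := by
        rw [Matrix.IsHermitian, conjTranspose_sub, conjTranspose_one, hKherm.eq]
      have heq : (1 : Matrix Q Q ℂ) - K = ((1 : Matrix Q Q ℂ) - K)ᴴ * ((1 : Matrix Q Q ℂ) - K) := by
        rw [hh.eq]
        calc (1 : Matrix Q Q ℂ) - K = 1 - K - K + K := by noncomm_ring
          _ = 1 - K - K + K * K := by rw [hKK]
          _ = ((1 : Matrix Q Q ℂ) - K) * (1 - K) := by noncomm_ring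
      rw [heq]
      exact posSemidef_conjTranspose_mul_self _
    set c : ℝ := ((Fintype.card ι : ℝ))⁻¹ with hcdef
    obtain ⟨Qm, hQmdef⟩ : ∃ Qm : ι → Matrix Q Q ℂ,
        ∀ a, Qm a = Vᴴ * Rp * σ a * Rp * V + (c : ℂ) • (1 - K) := ⟨_, fun _ => rfl⟩
    have hQpsd : ∀ a, (Qm a).PosSemidef := by
      intro a
      rw [hQmdef a]
      apply Matrix.PosSemidef.add
      · have h4 := (hσ a).conjTranspose_mul_mul_same (Rp * V)
        have heq : (Rp * V)ᴴ * σ a * (Rp * V) = Vᴴ * Rp * σ a * Rp * V := by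
          rw [conjTranspose_mul, hRpH.eq]
          simp only [Matrix.mul_assoc]
        rwa [heq] at h4
      · exact aux_psd_smul hKpsd1 (by positivity)
    have hQsum : ∑ a, Qm a = 1 := by
      have e1 : ∑ a, Vᴴ * Rp * σ a * Rp * V = K := by
        have h6 : ∀ a : ι, Vᴴ * Rp * σ a * Rp * V = Vᴴ * Rp * (σ a * (Rp * V)) := fun a => by
          simp only [Matrix.mul_assoc]
        calc ∑ a, Vᴴ * Rp * σ a * Rp * V = Vᴴ * Rp * ((∑ a, σ a) * (Rp * V)) := by
              rw [Finset.sum_congr rfl fun a _ => h6 a, ← Matrix.mul_sum, ← Matrix.sum_mul]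
          _ = Vᴴ * (Rp * (V * Vᴴ) * Rp) * V := by rw [hsum]; simp only [Matrix.mul_assoc]
          _ = K := by rw [hRpRRp, hKdef, Matrix.mul_assoc]
      have e2 : ∑ _a : ι, ((c : ℂ) • ((1 : Matrix Q Q ℂ) - K)) = (1 : Matrix Q Q ℂ) - K := by
        rw [Finset.sum_const, Finset.card_univ, ← Nat.cast_smul_eq_nsmul ℂ, smul_smul]
        have hc1 : ((Fintype.card ι : ℂ)) * (c : ℂ) = 1 := by
          rw [hcdef]
          have : (Fintype.card ι : ℝ) ≠ 0 := by
            exact_mod_cast Fintype.card_ne_zero (α := ι)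
          push_cast
          field_simp
        rw [hc1, one_smul]
      calc ∑ a, Qm a = (∑ a, Vᴴ * Rp * σ a * Rp * V) + ∑ _a : ι, ((c : ℂ) • ((1 : Matrix Q Q ℂ) - K)) := by
            rw [Finset.sum_congr rfl fun a _ => hQmdef a, Finset.sum_add_distrib]
        _ = K + (1 - K) := by rw [e1, e2]
        _ = 1 := by abel
    have hVQV : ∀ a, V * Qm a * Vᴴ = σ a := by
      intro a
      have hz := hEzero a
      have hRRp : V * Vᴴ * Rp = 1 - E := by rw [hEdef, sub_sub_cancel]
      have t1 : V * (Vᴴ * Rp * σ a * Rp * V) * Vᴴ = σ a := by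
        calc V * (Vᴴ * Rp * σ a * Rp * V) * Vᴴ
            = (V * Vᴴ * Rp) * σ a * (Rp * (V * Vᴴ)) := by simp only [Matrix.mul_assoc]
          _ = (1 - E) * σ a * (1 - E) := by rw [hRRp, ← hcomm, hRRp]
          _ = σ a := by
              have e3 : ((1 : Matrix O O ℂ) - E) * σ a = σ a := by
                rw [sub_mul, one_mul, hz.2, sub_zero]
              rw [e3, mul_sub, mul_one, hz.1, sub_zero]
      have t2 : V * ((c : ℂ) • ((1 : Matrix Q Q ℂ) - K)) * Vᴴ = 0 := by
        have e4 : V * K * Vᴴ = V * Vᴴ := by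
          rw [hKdef]
          have e4a : V * (Vᴴ * Rp * V) * Vᴴ = V * Vᴴ * Rp * (V * Vᴴ) := by
            simp only [Matrix.mul_assoc]
          rw [e4a, hRRpR]
        have e5 : V * ((1 : Matrix Q Q ℂ) - K) * Vᴴ = 0 := by
          rw [Matrix.mul_sub, Matrix.mul_one, Matrix.sub_mul, e4, sub_self]
        rw [Matrix.mul_smul, Matrix.smul_mul, e5, smul_zero]
      calc V * Qm a * Vᴴ
          = V * (Vᴴ * Rp * σ a * Rp * V) * Vᴴ + V * ((c : ℂ) • ((1 : Matrix Q Q ℂ) - K)) * Vᴴ := by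
            rw [hQmdef a, Matrix.mul_add, Matrix.add_mul]
        _ = σ a := by rw [t1, t2, add_zero]
    refine ⟨fun a => (Qm a)ᵀ, fun a => (hQpsd a).transpose, ?_, ?_⟩
    · rw [← Matrix.transpose_sum, hQsum, transpose_one]
    · intro a
      rw [hbridge, transpose_transpose, hVQV a]
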